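/- Let α ∈ (0,1), let θπ belong to the interior of Θ, and define f(θ) = (1/(α−1)) · log ∫ q_{θπ}(x)^α q_θ(x)^{1−α} ν(dx) for θ ∈ Θ (the Rényi divergence RD_α(q_{θπ}, q_θ)). Assume A is strictly convex on Θ. Then: (a) f(θ) ≥ 0 for every θ ∈ Θ, with f(θ) = 0 if and only if θ = θπ, so θπ is the unique minimizer of f and the minimum value is 0; (b) if moreover A is differentiable on the interior of Θ, then f is differentiable on the interior of Θ with gradient ∇f(θ) = ∇A(θ) − ∇A(α θπ + (1−α) θ), and for θ in the interior of Θ one has ∇f(θ) = 0 if and only if θ = θπ, so θπ is the unique stationary point of f. -/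

import Mathlib

open MeasureTheory Real
open scoped RealInnerProductSpace

private lemma grad_strictMono {H : Type*} [NormedAddCommGroup H] [InnerProductSpace ℝ H] [CompleteSpace H]
    {Θ : Set H} {A : H → ℝ} (h : StrictConvexOn ℝ Θ A)
    {x y gx gy : H} (hx : x ∈ Θ) (hy : y ∈ Θ) (hxy : x ≠ y)
    (hgx : HasGradientAt A gx x) (hgy : HasGradientAt A gy y) :
    ⟪gx, y - x⟫ < ⟪gy, y - x⟫ := by
  set c : ℝ → H := fun t => x + t • (y - x) with hcdef
  have hc0 : c 0 = x := by simp [hcdef]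
  have hc1 : c 1 = y := by simp [hcdef]
  set S : Set ℝ := c ⁻¹' Θ with hSdef
  have hcomb : ∀ (s t a b : ℝ), a + b = 1 → c (a * s + b * t) = a • c s + b • c t := by
    intro s t a b hab
    simp only [hcdef]
    rw [show a • (x + s • (y - x)) + b • (x + t • (y - x))
        = (a + b) • x + (a * s + b * t) • (y - x) by module, hab, one_smul]
  have hSconv : Convex ℝ S := by
    intro s hs t ht a b ha hb hab
    have hmem : c (a * s + b * t) ∈ Θ := by
      rw [hcomb s t a b hab]
      exact h.1 hs ht ha hb hab
    simpa [hSdef, smul_eq_mul] using hmem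
  have hstr : StrictConvexOn ℝ S (A ∘ c) := by
    refine ⟨hSconv, ?_⟩
    intro s hs t ht hst a b ha hb hab
    have hne : c s ≠ c t := by
      intro hEq
      apply hst
      have h1 : (s - t) • (y - x) = 0 := by
        have : x + s • (y - x) = x + t • (y - x) := hEq
        have h2 : s • (y - x) = t • (y - x) := by
          exact add_left_cancel this
        rw [sub_smul, h2, sub_self]
      rcases smul_eq_zero.mp h1 with h | h
      · exact sub_eq_zero.mp h
      · exact absurd h (sub_ne_zero.mpr (Ne.symm hxy))
    have hlt : A (c (a * s + b * t)) < a * A (c s) + b * A (c t) := by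
      rw [hcomb s t a b hab]
      exact h.2 hs ht hne ha hb hab
    simpa [Function.comp, smul_eq_mul] using hlt
  have hcurve : ∀ t : ℝ, HasDerivAt c (y - x) t := by
    intro t
    simpa [hcdef] using ((hasDerivAt_id t).smul_const (y - x)).const_add x
  have hd0 : HasDerivAt (A ∘ c) ((InnerProductSpace.toDual ℝ H gx) (y - x)) 0 := by
    have hfx := hgx.hasFDerivAt
    rw [← hc0] at hfx
    exact HasFDerivAt.comp_hasDerivAt 0 hfx (hcurve 0)
  have hd1 : HasDerivAt (A ∘ c) ((InnerProductSpace.toDual ℝ H gy) (y - x)) 1 := by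
    have hfy := hgy.hasFDerivAt
    rw [← hc1] at hfy
    exact HasFDerivAt.comp_hasDerivAt 1 hfy (hcurve 1)
  have h0 : (0 : ℝ) ∈ S := by show c 0 ∈ Θ; rw [hc0]; exact hx
  have h1 : (1 : ℝ) ∈ S := by show c 1 ∈ Θ; rw [hc1]; exact hy
  have := (hstr.lt_slope_of_hasDerivAt h0 h1 one_pos hd0).trans
    (hstr.slope_lt_of_hasDerivAt h0 h1 one_pos hd1)
  simpa [InnerProductSpace.toDual_apply_apply] using this

/-- When the target is a member `q_θπ` of the family with `θπ` in the interior of `Θ` and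
`A` is strictly convex: (a) the Rényi divergence `f` is nonnegative on `Θ` and vanishes
exactly at `θπ`, so `θπ` is the unique minimizer with minimum value `0`; (b) if `A` is
differentiable on the interior of `Θ` with gradient map `gA`, then `f` has gradient
`gA θ - gA (α θπ + (1-α) θ)` on the interior of `Θ`, which vanishes iff `θ = θπ`,
so `θπ` is the unique stationary point. -/
theorem statement9
    {X : Type*} [MeasurableSpace X] (ν : Measure X) [SigmaFinite ν] (hν : ν ≠ 0)
    {H : Type*} [NormedAddCommGroup H] [InnerProductSpace ℝ H] [FiniteDimensional ℝ H]
    [MeasurableSpace H] [BorelSpace H]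
    (Γ : X → H) (hΓ : Measurable Γ)
    (Θ : Set H) (hΘ : Θ = {θ : H | Integrable (fun x => exp ⟪θ, Γ x⟫) ν})
    (A : H → ℝ) (hA : ∀ θ, A θ = log (∫ x, exp ⟪θ, Γ x⟫ ∂ν))
    (q : H → X → ℝ) (hq : ∀ θ x, q θ x = exp (⟪θ, Γ x⟫ - A θ))
    (α : ℝ) (hα : α ∈ Set.Ioo (0:ℝ) 1)
    (θπ : H) (hθπ : θπ ∈ interior Θ)
    (f : H → ℝ)
    (hf : ∀ θ, f θ = (1/(α-1)) * log (∫ x, q θπ x ^ α * q θ x ^ (1-α) ∂ν))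
    (hstrict : StrictConvexOn ℝ Θ A) :
    (∀ θ ∈ Θ, 0 ≤ f θ ∧ (f θ = 0 ↔ θ = θπ)) ∧
    (∀ gA : H → H, (∀ θ ∈ interior Θ, HasGradientAt A (gA θ) θ) →
      ∀ θ ∈ interior Θ,
        HasGradientAt f (gA θ - gA (α • θπ + (1 - α) • θ)) θ ∧
        (gA θ - gA (α • θπ + (1 - α) • θ) = 0 ↔ θ = θπ)) := by
  have hα1 : α - 1 < 0 := by linarith [hα.2]
  have hα1' : α - 1 ≠ 0 := ne_of_lt hα1
  have hconv : Convex ℝ Θ := hstrict.1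
  have hθπΘ : θπ ∈ Θ := interior_subset hθπ
  have hInt : ∀ θ ∈ Θ, Integrable (fun x => exp ⟪θ, Γ x⟫) ν := by
    intro θ hθ; rwa [hΘ] at hθ
  have hpos : ∀ θ ∈ Θ, 0 < ∫ x, exp ⟪θ, Γ x⟫ ∂ν := by
    intro θ hθ
    rw [integral_pos_iff_support_of_nonneg (fun x => (exp_pos _).le) (hInt θ hθ)]
    have hs : Function.support (fun x => exp ⟪θ, Γ x⟫) = Set.univ := by
      ext x; simp [Function.support, Real.exp_ne_zero]
    rw [hs]
    exact Measure.measure_univ_pos.mpr hν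
  have hexpA : ∀ θ ∈ Θ, exp (A θ) = ∫ x, exp ⟪θ, Γ x⟫ ∂ν := by
    intro θ hθ; rw [hA θ, exp_log (hpos θ hθ)]
  have hτmem : ∀ θ ∈ Θ, α • θπ + (1 - α) • θ ∈ Θ := fun θ hθ =>
    hconv hθπΘ hθ (show (0:ℝ) ≤ α from hα.1.le) (show (0:ℝ) ≤ 1 - α by linarith [hα.2])
      (by ring)
  have e1 : ∀ a b : ℝ, exp a ^ b = exp (a * b) := fun a b => by
    rw [Real.rpow_def_of_pos (exp_pos a), log_exp]
  have hkey : ∀ θ ∈ Θ,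
      f θ = (1/(α-1)) * (A (α • θπ + (1 - α) • θ) - (α * A θπ + (1 - α) * A θ)) := by
    intro θ hθ
    have hint_eq : ∀ x, q θπ x ^ α * q θ x ^ (1-α)
        = exp ⟪α • θπ + (1 - α) • θ, Γ x⟫ * exp (-(α * A θπ + (1 - α) * A θ)) := by
      intro x
      rw [hq, hq, e1, e1, ← exp_add, ← exp_add]
      congr 1
      rw [inner_add_left, real_inner_smul_left, real_inner_smul_left]
      ring
    rw [hf θ]
    simp only [hint_eq]
    rw [integral_mul_const, ← hexpA _ (hτmem θ hθ), ← exp_add, log_exp]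
    ring
  constructor
  · intro θ hθ
    have hk := hkey θ hθ
    have hle : A (α • θπ + (1 - α) • θ) ≤ α * A θπ + (1 - α) * A θ := by
      have := hstrict.convexOn.2 hθπΘ hθ (show (0:ℝ) ≤ α from hα.1.le)
        (show (0:ℝ) ≤ 1 - α by linarith [hα.2]) (by ring)
      simpa [smul_eq_mul] using this
    constructor
    · rw [hk]
      have h2 : A (α • θπ + (1 - α) • θ) - (α * A θπ + (1 - α) * A θ) ≤ 0 := by linarith
      have h3 : (1/(α-1) : ℝ) ≤ 0 := by
        apply div_nonpos_of_nonneg_of_nonpos <;> linarith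
      nlinarith
    · constructor
      · intro h0
        by_contra hne
        have hlt : A (α • θπ + (1 - α) • θ) < α * A θπ + (1 - α) * A θ := by
          have := hstrict.2 hθπΘ hθ (fun hEq => hne (hEq ▸ rfl))
            (show (0:ℝ) < α from hα.1) (show (0:ℝ) < 1 - α by linarith [hα.2]) (by ring)
          simpa [smul_eq_mul] using this
        rw [hk] at h0
        rcases mul_eq_zero.mp h0 with h | h
        · exact absurd h (one_div_ne_zero hα1')
        · linarith
      · intro h0
        subst h0
        rw [hk]
        rw [show α • θ + (1 - α) • θ = θ by module]
        ring
  · intro gA hgA θ hθint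
    have hθ : θ ∈ Θ := interior_subset hθint
    have hτint : α • θπ + (1 - α) • θ ∈ interior Θ :=
      hconv.interior hθπ hθint (show (0:ℝ) ≤ α from hα.1.le)
        (show (0:ℝ) ≤ 1 - α by linarith [hα.2]) (by ring)
    set τ : H := α • θπ + (1 - α) • θ with hτdef
    have hFeq : f =ᶠ[nhds θ]
        fun θ' => (1/(α-1)) * (A (α • θπ + (1 - α) • θ') - (α * A θπ + (1 - α) * A θ')) := by
      filter_upwards [isOpen_interior.mem_nhds hθint] with θ' hθ'
      exact hkey θ' (interior_subset hθ')
    have hcurve : HasFDerivAt (fun θ' : H => α • θπ + (1 - α) • θ')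
        ((1 - α) • ContinuousLinearMap.id ℝ H) θ :=
      ((hasFDerivAt_id θ).const_smul (1 - α)).const_add (α • θπ)
    have hAτ : HasFDerivAt (fun θ' : H => A (α • θπ + (1 - α) • θ'))
        ((InnerProductSpace.toDual ℝ H (gA τ)).comp ((1 - α) • ContinuousLinearMap.id ℝ H)) θ :=
      HasFDerivAt.comp θ ((hgA τ hτint).hasFDerivAt) hcurve
    have hAθ : HasFDerivAt A (InnerProductSpace.toDual ℝ H (gA θ)) θ :=
      (hgA θ hθint).hasFDerivAt
    have hF : HasFDerivAt
        (fun θ' => (1/(α-1)) * (A (α • θπ + (1 - α) • θ') - (α * A θπ + (1 - α) * A θ')))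
        ((1/(α-1)) • (((InnerProductSpace.toDual ℝ H (gA τ)).comp
            ((1 - α) • ContinuousLinearMap.id ℝ H))
          - ((1 - α) • InnerProductSpace.toDual ℝ H (gA θ)))) θ :=
      (hAτ.sub ((hAθ.const_mul (1 - α)).const_add (α * A θπ))).const_mul (1/(α-1))
    have hLeq : ((1/(α-1)) • (((InnerProductSpace.toDual ℝ H (gA τ)).comp
            ((1 - α) • ContinuousLinearMap.id ℝ H))
          - ((1 - α) • InnerProductSpace.toDual ℝ H (gA θ))))
        = InnerProductSpace.toDual ℝ H (gA θ - gA τ) := by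
      ext v
      simp only [ContinuousLinearMap.smul_apply, ContinuousLinearMap.sub_apply,
        ContinuousLinearMap.comp_apply, ContinuousLinearMap.id_apply,
        InnerProductSpace.toDual_apply_apply, inner_sub_left, real_inner_smul_right, smul_eq_mul]
      field_simp
      ring
    have hGrad : HasGradientAt f (gA θ - gA τ) θ := by
      rw [hasGradientAt_iff_hasFDerivAt]
      exact (hLeq ▸ hF).congr_of_eventuallyEq hFeq
    refine ⟨hGrad, ?_, ?_⟩
    · intro h0
      by_contra hne
      have hθτ : θ ≠ τ := by
        intro hEq
        apply hne
        have h2 : α • θ = α • θπ := by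
          have h3 : θ - (1 - α) • θ = α • θ := by module
          rw [← h3]
          nth_rewrite 1 [hEq]
          rw [hτdef]
          module
        exact smul_right_injective H (ne_of_gt hα.1) h2
      have hmono := grad_strictMono hstrict hθ (interior_subset hτint) hθτ
        (hgA θ hθint) (hgA τ hτint)
      rw [sub_eq_zero] at h0
      rw [h0] at hmono
      exact lt_irrefl _ hmono
    · intro h0
      subst h0
      rw [show τ = θ by rw [hτdef]; module, sub_self]
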